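/- arXiv:1809.03198 — 2 statements merged into one kernel-verified Lean document; each statement's English description precedes it below -/
import Mathlib

section
/- Let R be a commutative ring, (x₁, …, x_d) a regular sequence generating an ideal J, E = R^d the free module with basis e₁, …, e_d, and s: E → R the map (y_i e_i) ↦ Σ y_i x_i. Let K_• be the Koszul complex of s with differential d_i(α₁ ∧ ⋯ ∧ α_i) = Σ_t (−1)^{t+1} s(α_t) α₁ ∧ ⋯ ∧ α̂_t ∧ ⋯ ∧ α_i. Then the augmented Koszul complex K_• → R/J is exact, i.e., K_• is a free resolution of R/J. -/
open ExteriorAlgebra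

/-- The wedge `v₁ ∧ ⋯ ∧ vₙ` as an element of the `n`-th exterior power
`⋀[R]^n M ⊆ ExteriorAlgebra R M`. -/
noncomputable def wedgeProd (R : Type*) [CommRing R] {M : Type*} [AddCommGroup M]
    [Module R M] {n : ℕ} (v : Fin n → M) : ⋀[R]^n M :=
  ⟨ExteriorAlgebra.ιMulti R n v, ExteriorAlgebra.ιMulti_range R n ⟨v, rfl⟩⟩


open Finset

namespace KoszulAux

variable {R : Type*} [CommRing R]

/-- Index type: subsets of `Fin m` of cardinality `n`. -/
abbrev SSet (m n : ℕ) := {S : Finset (Fin m) // S.card = n}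

/-- Concrete Koszul chain group. -/
abbrev CC (R : Type*) [CommRing R] (m n : ℕ) := SSet m n → R

/-- number of elements of `S` below `j`. -/
def pos {m : ℕ} (S : Finset (Fin m)) (j : Fin m) : ℕ := (S.filter (· < j)).card

/-- The concrete Koszul differential. -/
noncomputable def DD {m : ℕ} (x : Fin m → R) (n : ℕ) : CC R m (n+1) →ₗ[R] CC R m n :=
  LinearMap.pi fun S => ∑ j : Fin m, if h : j ∈ S.1 then 0 else
    ((-1:R)^(pos S.1 j) * x j) • LinearMap.proj (R := R)
      ⟨insert j S.1, by rw [Finset.card_insert_of_notMem h, S.2]⟩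

lemma DD_apply {m : ℕ} (x : Fin m → R) (n : ℕ) (f : CC R m (n+1)) (S : SSet m n) :
    DD x n f S = ∑ j : Fin m, if h : j ∈ S.1 then 0 else
      (-1:R)^(pos S.1 j) * x j * f ⟨insert j S.1, by
        rw [Finset.card_insert_of_notMem h, S.2]⟩ := by
  simp only [DD, LinearMap.pi_apply, LinearMap.sum_apply]
  refine Finset.sum_congr rfl fun j _ => ?_
  rw [apply_dite (fun (g : CC R m (n+1) →ₗ[R] R) => g f)]
  split <;> simp

lemma DD_val_mem {m : ℕ} (x : Fin m → R) (n : ℕ) (f : CC R m (n+1)) (S : SSet m n) :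
    DD x n f S ∈ Ideal.span (Set.range x) := by
  rw [DD_apply]
  refine Ideal.sum_mem _ fun j _ => ?_
  split
  · exact zero_mem _
  · rw [mul_comm ((-1:R)^(pos S.1 j)) (x j), mul_assoc]
    exact Ideal.mul_mem_right _ _ (Ideal.subset_span ⟨j, rfl⟩)



/-- push a subset of `Fin m` into `Fin (m+1)`. -/
def mapC {m : ℕ} (T : Finset (Fin m)) : Finset (Fin (m+1)) := T.map Fin.castSuccEmb

@[simp] lemma mem_mapC {m : ℕ} {T : Finset (Fin m)} {j : Fin m} :
    j.castSucc ∈ mapC T ↔ j ∈ T := Finset.mem_map' _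

@[simp] lemma card_mapC {m : ℕ} (T : Finset (Fin m)) : (mapC T).card = T.card :=
  Finset.card_map _

lemma last_not_mem_mapC {m : ℕ} (T : Finset (Fin m)) : Fin.last m ∉ mapC T := by
  intro h
  obtain ⟨b, _, hb⟩ := Finset.mem_map.1 h
  exact absurd hb (Fin.ne_last_of_lt (Fin.castSucc_lt_last b) : Fin.castSuccEmb b ≠ _)

/-- pull back a subset of `Fin (m+1)` to `Fin m`. -/
noncomputable def pull {m : ℕ} (S : Finset (Fin (m+1))) : Finset (Fin m) :=
  S.preimage Fin.castSucc (Fin.castSucc_injective m).injOn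

@[simp] lemma mem_pull {m : ℕ} {S : Finset (Fin (m+1))} {j : Fin m} :
    j ∈ pull S ↔ j.castSucc ∈ S := Finset.mem_preimage

@[simp] lemma pull_mapC {m : ℕ} (T : Finset (Fin m)) : pull (mapC T) = T := by
  ext j; simp

lemma mapC_pull {m : ℕ} {S : Finset (Fin (m+1))} (h : Fin.last m ∉ S) :
    mapC (pull S) = S := by
  ext a
  constructor
  · intro ha
    obtain ⟨b, hb, rfl⟩ := Finset.mem_map.1 ha
    exact mem_pull.1 hb
  · intro ha
    obtain ⟨b, rfl⟩ := Fin.exists_castSucc_eq.2 (fun he => h (he ▸ ha))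
    exact mem_mapC.2 (mem_pull.2 ha)

lemma card_pull {m : ℕ} {S : Finset (Fin (m+1))} (h : Fin.last m ∉ S) :
    (pull S).card = S.card := by
  conv_rhs => rw [← mapC_pull h]
  exact (card_mapC _).symm

/-- first restriction: subsets avoiding `last`. -/
def res₁ {m n : ℕ} (f : CC R (m+1) n) : CC R m n := fun T =>
  f ⟨mapC T.1, by rw [card_mapC, T.2]⟩

/-- second restriction: subsets containing `last`. -/
def res₂ {m n : ℕ} (f : CC R (m+1) (n+1)) : CC R m n := fun T =>
  f ⟨insert (Fin.last m) (mapC T.1), by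
    rw [Finset.card_insert_of_notMem (last_not_mem_mapC _), card_mapC, T.2]⟩

/-- glue two chains over `Fin m` into a chain over `Fin (m+1)`. -/
noncomputable def glue {m n : ℕ} (a : CC R m (n+1)) (b : CC R m n) : CC R (m+1) (n+1) := fun S =>
  if h : Fin.last m ∈ S.1 then
    b ⟨pull (S.1.erase (Fin.last m)), by
      rw [card_pull (Finset.notMem_erase _ _), Finset.card_erase_of_mem h, S.2]; rfl⟩
  else a ⟨pull S.1, by rw [card_pull h, S.2]⟩

@[simp] lemma res₁_glue {m n : ℕ} (a : CC R m (n+1)) (b : CC R m n) :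
    res₁ (glue a b) = a := by
  funext T
  rw [res₁, glue, dif_neg (last_not_mem_mapC _)]
  exact congrArg a (Subtype.ext (pull_mapC _))

@[simp] lemma res₂_glue {m n : ℕ} (a : CC R m (n+1)) (b : CC R m n) :
    res₂ (glue a b) = b := by
  funext T
  rw [res₂, glue, dif_pos (Finset.mem_insert_self _ _)]
  refine congrArg b (Subtype.ext ?_)
  show pull ((insert (Fin.last m) (mapC T.1)).erase (Fin.last m)) = T.1
  rw [Finset.erase_insert (last_not_mem_mapC _), pull_mapC]

lemma glue_res {m n : ℕ} (f : CC R (m+1) (n+1)) : glue (res₁ f) (res₂ f) = f := by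
  funext S
  rw [glue]
  split
  · rename_i h
    refine congrArg f (Subtype.ext ?_)
    show insert (Fin.last m) (mapC (pull (S.1.erase (Fin.last m)))) = S.1
    rw [mapC_pull (Finset.notMem_erase _ _), Finset.insert_erase h]
  · rename_i h
    exact congrArg f (Subtype.ext (mapC_pull h))

lemma eq_of_res {m n : ℕ} {f g : CC R (m+1) (n+1)} (h1 : res₁ f = res₁ g)
    (h2 : res₂ f = res₂ g) : f = g := by
  rw [← glue_res f, h1, h2, glue_res]

lemma eq_of_res₁_level0 {m : ℕ} {f g : CC R (m+1) 0} (h1 : res₁ f = res₁ g) : f = g := by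
  funext S
  have hS : S.1 = ∅ := Finset.card_eq_zero.1 S.2
  have h0 : (mapC (∅ : Finset (Fin m))) = S.1 := by rw [hS]; rfl
  have := congrFun h1 ⟨∅, rfl⟩
  rw [res₁, res₁] at this
  convert this using 2 <;> exact (Subtype.ext h0.symm)

@[simp] lemma res₁_add {m n : ℕ} (f g : CC R (m+1) n) :
    res₁ (f + g) = res₁ f + res₁ g := rfl
@[simp] lemma res₂_add {m n : ℕ} (f g : CC R (m+1) (n+1)) :
    res₂ (f + g) = res₂ f + res₂ g := rfl
@[simp] lemma res₁_smul {m n : ℕ} (c : R) (f : CC R (m+1) n) :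
    res₁ (c • f) = c • res₁ f := rfl
@[simp] lemma res₂_smul {m n : ℕ} (c : R) (f : CC R (m+1) (n+1)) :
    res₂ (c • f) = c • res₂ f := rfl
@[simp] lemma res₁_zero {m n : ℕ} : res₁ (0 : CC R (m+1) n) = 0 := rfl
@[simp] lemma res₂_zero {m n : ℕ} : res₂ (0 : CC R (m+1) (n+1)) = 0 := rfl

end KoszulAux
section Ctest
open Finset
namespace KoszulAux
variable {R : Type*} [CommRing R]

lemma pos_mapC {m : ℕ} (T : Finset (Fin m)) (i : Fin m) :
    pos (mapC T) i.castSucc = pos T i := by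
  rw [pos, pos, mapC, Finset.filter_map, Finset.card_map]
  congr 1

lemma pos_mapC_last {m : ℕ} (T : Finset (Fin m)) : pos (mapC T) (Fin.last m) = T.card := by
  rw [pos, Finset.filter_true_of_mem, card_mapC]
  intro a ha
  obtain ⟨b, _, rfl⟩ := Finset.mem_map.1 ha
  exact Fin.castSucc_lt_last b

lemma pos_insert_last {m : ℕ} (S : Finset (Fin (m+1))) (i : Fin m) :
    pos (insert (Fin.last m) S) i.castSucc = pos S i.castSucc := by
  rw [pos, pos, Finset.filter_insert, if_neg]
  exact Fin.not_lt.2 (le_of_lt (Fin.castSucc_lt_last i))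

lemma castSucc_mem_insert_last {m : ℕ} (S : Finset (Fin (m+1))) (i : Fin m) :
    i.castSucc ∈ insert (Fin.last m) S ↔ i.castSucc ∈ S := by
  rw [Finset.mem_insert, or_iff_right]
  exact (Fin.ne_last_of_lt (Fin.castSucc_lt_last i))

lemma insert_mapC {m : ℕ} (T : Finset (Fin m)) (i : Fin m) :
    insert i.castSucc (mapC T) = mapC (insert i T) :=
  (Finset.map_insert _ _ _).symm

lemma res₂_DD {m : ℕ} (x : Fin (m+1) → R) (n : ℕ) (f : CC R (m+1) (n+2)) :
    res₂ (DD x (n+1) f) = DD (fun i => x i.castSucc) n (res₂ f) := by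
  funext T
  rw [res₂]
  rw [DD_apply, DD_apply]
  rw [Fin.sum_univ_castSucc]
  rw [dif_pos (Finset.mem_insert_self _ _), add_zero]
  refine Finset.sum_congr rfl fun i _ => ?_
  by_cases hi : i ∈ T.1
  · rw [dif_pos, dif_pos hi]
    rw [castSucc_mem_insert_last]
    exact mem_mapC.2 hi
  · rw [dif_neg, dif_neg hi]
    · rw [pos_insert_last, pos_mapC]
      congr 1
      rw [res₂]
      refine congrArg f (Subtype.ext ?_)
      show insert i.castSucc (insert (Fin.last m) (mapC T.1))
          = insert (Fin.last m) (mapC (insert i T.1))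
      rw [Finset.insert_comm, insert_mapC]
    · rw [castSucc_mem_insert_last]
      exact fun hc => hi (mem_mapC.1 hc)

lemma res₁_DD {m : ℕ} (x : Fin (m+1) → R) (n : ℕ) (f : CC R (m+1) (n+1)) :
    res₁ (DD x n f) = DD (fun i => x i.castSucc) n (res₁ f)
      + ((-1:R)^n * x (Fin.last m)) • res₂ f := by
  funext T
  rw [res₁, DD_apply, Fin.sum_univ_castSucc]
  rw [Pi.add_apply, Pi.smul_apply, DD_apply, smul_eq_mul]
  congr 1
  · refine Finset.sum_congr rfl fun i _ => ?_
    by_cases hi : i ∈ T.1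
    · rw [dif_pos (mem_mapC.2 hi), dif_pos hi]
    · rw [dif_neg (fun hc => hi (mem_mapC.1 hc)), dif_neg hi]
      rw [pos_mapC]
      congr 1
      rw [res₁]
      refine congrArg f (Subtype.ext ?_)
      exact insert_mapC T.1 i
  · rw [dif_neg (last_not_mem_mapC _), pos_mapC_last, T.2]
    rfl

end KoszulAux
end Ctest
section Dtest
open Finset
namespace KoszulAux
variable {R : Type*} [CommRing R]

lemma DD_DD : ∀ {m : ℕ} (x : Fin m → R) (n : ℕ) (f : CC R m (n+2)),
    DD x n (DD x (n+1) f) = 0 := by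
  intro m
  induction m with
  | zero =>
    intro x n f
    funext S
    rw [DD_apply]
    simp
  | succ m ih =>
    intro x n f
    have h1 : res₁ (DD x n (DD x (n+1) f)) = 0 := by
      rw [res₁_DD, res₂_DD, res₁_DD, map_add, map_smul, ih, zero_add, ← add_smul]
      have hc : (-1:R)^(n+1) * x (Fin.last m) + (-1)^n * x (Fin.last m) = 0 := by
        rw [pow_succ]; ring
      rw [hc, zero_smul]
    cases n with
    | zero => exact eq_of_res₁_level0 (by rw [h1]; rfl)
    | succ k =>
      refine eq_of_res (by rw [h1]; rfl) ?_
      rw [res₂_DD, res₂_DD, ih]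
      rfl

end KoszulAux
end Dtest
section Etest
open Finset
namespace KoszulAux
variable {R : Type*} [CommRing R]

lemma span_range_eq_ofList {k : ℕ} (y : Fin k → R) :
    Ideal.ofList (List.ofFn y) = Ideal.span (Set.range y) := by
  unfold Ideal.ofList
  congr 1
  ext a
  simp [List.mem_ofFn]

open RingTheory.Sequence in
lemma koszul_exact_concrete : ∀ {m : ℕ} (x : Fin m → R),
    IsWeaklyRegular R (List.ofFn x) →
    (∀ r : CC R m 0, r ⟨∅, Finset.card_empty⟩ ∈ Ideal.span (Set.range x) →
        ∃ f, DD x 0 f = r) ∧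
    (∀ (n : ℕ) (f : CC R m (n+1)), DD x n f = 0 → ∃ g, DD x (n+1) g = f) := by
  intro m
  induction m with
  | zero =>
    intro x _
    constructor
    · intro r hr
      have hsp : Ideal.span (Set.range x) = ⊥ := by
        rw [Set.range_eq_empty x, Ideal.span_empty]
      rw [hsp, Submodule.mem_bot] at hr
      refine ⟨0, ?_⟩
      rw [map_zero]
      funext S
      have hS : S = ⟨∅, Finset.card_empty⟩ := Subtype.ext (Finset.card_eq_zero.1 S.2)
      rw [hS]
      exact hr.symm
    · intro n f _
      refine ⟨0, ?_⟩
      rw [map_zero]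
      funext S
      exfalso
      have := Finset.card_le_univ S.1
      rw [S.2] at this
      simp at this
  | succ m ih =>
    intro x hx
    set x' : Fin m → R := fun i => x i.castSucc with hx'def
    have hofn : List.ofFn x = List.ofFn x' ++ [x (Fin.last m)] := by
      rw [List.ofFn_succ', List.concat_eq_append]
    rw [hofn] at hx
    have hsplit := (isWeaklyRegular_append_iff R (List.ofFn x') [x (Fin.last m)]).1 hx
    have hx'reg := hsplit.1
    have htop : (Ideal.ofList (List.ofFn x') • ⊤ : Submodule R R)
        = Ideal.span (Set.range x') := by
      rw [smul_eq_mul, Ideal.mul_top, span_range_eq_ofList]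
    have hlast : IsSMulRegular
        (R ⧸ (Ideal.ofList (List.ofFn x') • ⊤ : Submodule R R)) (x (Fin.last m)) :=
      (isWeaklyRegular_singleton_iff _ _).1 hsplit.2
    have hreg' : ∀ b : R, x (Fin.last m) * b ∈ Ideal.span (Set.range x') →
        b ∈ Ideal.span (Set.range x') := by
      intro b hb
      have h0 : x (Fin.last m) •
          (Submodule.Quotient.mk b :
            R ⧸ (Ideal.ofList (List.ofFn x') • ⊤ : Submodule R R)) = 0 := by
        rw [← Submodule.Quotient.mk_smul, Submodule.Quotient.mk_eq_zero, htop]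
        simpa using hb
      have h2 : Submodule.Quotient.mk b = (0 :
          R ⧸ (Ideal.ofList (List.ofFn x') • ⊤ : Submodule R R)) := by
        refine hlast ?_
        show x (Fin.last m) • _ = x (Fin.last m) • (0 :
          R ⧸ (Ideal.ofList (List.ofFn x') • ⊤ : Submodule R R))
        rw [h0, smul_zero]
      rw [Submodule.Quotient.mk_eq_zero, htop] at h2
      exact h2
    have hspan : Ideal.span (Set.range x)
        = Ideal.span (Set.range x') ⊔ Ideal.span {x (Fin.last m)} := by
      rw [← span_range_eq_ofList x, hofn, Ideal.ofList_append, span_range_eq_ofList,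
        Ideal.ofList_singleton]
    constructor
    · intro r hr
      rw [hspan] at hr
      obtain ⟨u, hu, v, hv, huv⟩ := Submodule.mem_sup.1 hr
      obtain ⟨c, rfl⟩ := Ideal.mem_span_singleton'.1 hv
      obtain ⟨a, ha⟩ := (ih x' hx'reg).1 (fun _ => u) hu
      refine ⟨glue a (fun _ => c), ?_⟩
      apply eq_of_res₁_level0
      rw [res₁_DD, res₁_glue, res₂_glue, ha]
      funext T
      have hT : T.1 = ∅ := Finset.card_eq_zero.1 T.2
      have hrT : res₁ r T = r ⟨∅, Finset.card_empty⟩ := by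
        rw [res₁]
        refine congrArg r (Subtype.ext ?_)
        show mapC T.1 = ∅
        rw [hT]
        rfl
      show u + ((-1:R)^0 * x (Fin.last m)) * c = res₁ r T
      rw [hrT, ← huv, pow_zero, one_mul, mul_comm]
    · intro n f hf
      have hres₁ : DD x' n (res₁ f) + ((-1:R)^n * x (Fin.last m)) • res₂ f = 0 := by
        rw [← res₁_DD, hf]
        rfl
      cases n with
      | zero =>
        have hb : res₂ f ⟨∅, Finset.card_empty⟩ ∈ Ideal.span (Set.range x') := by
          apply hreg'
          have h := congrFun hres₁ ⟨∅, Finset.card_empty⟩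
          simp only [Pi.add_apply, Pi.smul_apply, Pi.zero_apply, smul_eq_mul, pow_zero,
            one_mul] at h
          rw [eq_neg_of_add_eq_zero_right h]
          exact neg_mem (DD_val_mem x' 0 (res₁ f) _)
        obtain ⟨h1, hh1⟩ := (ih x' hx'reg).1 (res₂ f) hb
        have hcyc : DD x' 0 (res₁ f + (x (Fin.last m)) • h1) = 0 := by
          rw [map_add, map_smul, hh1]
          have h := hres₁
          rw [pow_zero, one_mul] at h
          exact h
        obtain ⟨g1, hg1⟩ := (ih x' hx'reg).2 0 _ hcyc
        refine ⟨glue g1 h1, ?_⟩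
        refine eq_of_res ?_ ?_
        · rw [res₁_DD, res₁_glue, res₂_glue, hg1]
          rw [pow_one, neg_one_mul, neg_smul, add_assoc, add_neg_cancel, add_zero]
        · rw [res₂_DD, res₂_glue, hh1]
      | succ k =>
        have hres₂ : DD x' k (res₂ f) = 0 := by
          rw [← res₂_DD, hf]
          rfl
        obtain ⟨h1, hh1⟩ := (ih x' hx'reg).2 k (res₂ f) hres₂
        have hcyc : DD x' (k+1) (res₁ f + ((-1:R)^(k+1) * x (Fin.last m)) • h1) = 0 := by
          rw [map_add, map_smul, hh1]
          exact hres₁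
        obtain ⟨g1, hg1⟩ := (ih x' hx'reg).2 (k+1) _ hcyc
        refine ⟨glue g1 h1, ?_⟩
        refine eq_of_res ?_ ?_
        · rw [res₁_DD, res₁_glue, res₂_glue, hg1]
          have hz : ((-1:R)^(k+1) * x (Fin.last m)) • h1
              + ((-1:R)^(k+1+1) * x (Fin.last m)) • h1 = 0 := by
            rw [← add_smul]
            have hc : (-1:R)^(k+1) * x (Fin.last m)
                + (-1:R)^(k+1+1) * x (Fin.last m) = 0 := by
              rw [pow_succ (-1:R) (k+1)]; ring
            rw [hc, zero_smul]
          conv_lhs => rw [add_assoc]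
          rw [hz, add_zero]
        · rw [res₂_DD, res₂_glue, hh1]

end KoszulAux
end Etest
section Ftest
open ExteriorAlgebra Finset


namespace KoszulAux
variable {R : Type*} [CommRing R]

variable (R) in
/-- standard basis vector -/
def ee (d : ℕ) (j : Fin d) : Fin d → R := Pi.single j 1

/-- the increasing family of basis vectors indexed by a subset -/
def basFam {d n : ℕ} (S : SSet d n) : Fin n → (Fin d → R) :=
  fun i => ee R d (S.1.orderEmbOfFin S.2 i)

/-- wedge of basis vectors -/
noncomputable def wB {d n : ℕ} (S : SSet d n) : ⋀[R]^n (Fin d → R) :=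
  wedgeProd R (basFam S)

noncomputable def Psi (d n : ℕ) : CC R d n →ₗ[R] ⋀[R]^n (Fin d → R) :=
  ∑ S : SSet d n, (LinearMap.proj S).smulRight (wB S)

lemma Psi_apply {d n : ℕ} (f : CC R d n) :
    Psi d n f = ∑ S : SSet d n, f S • wB S := by
  rw [Psi, LinearMap.sum_apply]
  rfl

lemma Psi_single {d n : ℕ} (T : SSet d n) : Psi d n (Pi.single T (1:R)) = wB T := by
  rw [Psi_apply, Finset.sum_eq_single T]
  · simp
  · intro S _ hS
    rw [Pi.single_apply, if_neg hS, zero_smul]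
  · intro h
    exact absurd (Finset.mem_univ T) h

noncomputable def detF (d n : ℕ) (S : SSet d n) : (Fin d → R) [⋀^Fin n]→ₗ[R] R :=
  (Matrix.detRowAlternating (n := Fin n) (R := R)).compLinearMap
    (LinearMap.funLeft R R (S.1.orderEmbOfFin S.2))

noncomputable def lam (d n : ℕ) (S : SSet d n) : (⋀[R]^n (Fin d → R)) →ₗ[R] R :=
  (ExteriorAlgebra.liftAlternating
      (Function.update (fun i => (0 : (Fin d → R) [⋀^Fin i]→ₗ[R] R)) n (detF d n S))).comp
    (Submodule.subtype _)

lemma lam_wedge {d n : ℕ} (S : SSet d n) (v : Fin n → (Fin d → R)) :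
    lam d n S (wedgeProd R v) = detF d n S v := by
  show ExteriorAlgebra.liftAlternating _ (ιMulti R n v) = _
  rw [ExteriorAlgebra.liftAlternating_apply_ιMulti, Function.update_self]

lemma lam_wB {d n : ℕ} (S T : SSet d n) :
    lam d n S (wB T) = if S = T then (1:R) else 0 := by
  rw [wB, lam_wedge]
  by_cases h : S = T
  · subst h
    rw [if_pos rfl]
    show Matrix.detRowAlternating
      (fun i => LinearMap.funLeft R R (S.1.orderEmbOfFin S.2) (basFam S i)) = 1
    have hm : (fun i => LinearMap.funLeft R R (S.1.orderEmbOfFin S.2) (basFam S i))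
        = (1 : Matrix (Fin n) (Fin n) R) := by
      funext i j
      show (basFam S i) (S.1.orderEmbOfFin S.2 j) = (1 : Matrix (Fin n) (Fin n) R) i j
      rw [basFam, ee, Pi.single_apply, Matrix.one_apply]
      by_cases hij : i = j
      · subst hij; simp
      · rw [if_neg, if_neg hij]
        intro hc
        exact hij (((S.1.orderEmbOfFin S.2).injective hc).symm)
    rw [hm]
    exact Matrix.det_one
  · rw [if_neg h]
    have hns : ¬ T.1 ⊆ S.1 := by
      intro hsub
      exact h (Subtype.ext (Finset.eq_of_subset_of_card_le hsub
        (by rw [S.2, T.2])).symm)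
    obtain ⟨t, htT, htS⟩ := Finset.not_subset.1 hns
    have : t ∈ Set.range (T.1.orderEmbOfFin T.2) := by
      rw [Finset.range_orderEmbOfFin]; exact htT
    obtain ⟨i₀, rfl⟩ := this
    show Matrix.detRowAlternating
      (fun i => LinearMap.funLeft R R (S.1.orderEmbOfFin S.2) (basFam T i)) = 0
    apply Matrix.det_eq_zero_of_row_eq_zero i₀
    intro j
    show (basFam T i₀) (S.1.orderEmbOfFin S.2 j) = 0
    rw [basFam, ee, Pi.single_apply, if_neg]
    intro hc
    rw [← hc] at htS
    exact htS (Finset.orderEmbOfFin_mem _ _ _)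

noncomputable def Phi (d n : ℕ) : (⋀[R]^n (Fin d → R)) →ₗ[R] CC R d n :=
  LinearMap.pi fun S => lam d n S

lemma Phi_Psi {d n : ℕ} (f : CC R d n) : Phi d n (Psi d n f) = f := by
  funext S
  show lam d n S (Psi d n f) = f S
  rw [Psi_apply, map_sum, Finset.sum_eq_single S]
  · rw [map_smul, lam_wB, if_pos rfl, smul_eq_mul, mul_one]
  · intro T _ hT
    rw [map_smul, lam_wB, if_neg (Ne.symm hT), smul_zero]
  · intro h
    exact absurd (Finset.mem_univ S) h

lemma Psi_injective {d n : ℕ} : Function.Injective (Psi (R := R) d n) := by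
  intro a b hab
  have := congrArg (Phi d n) hab
  rwa [Phi_Psi, Phi_Psi] at this

end KoszulAux
end Ftest
section Htest
open ExteriorAlgebra Finset
namespace KoszulAux
variable {R : Type*} [CommRing R]

lemma ee_eq {d : ℕ} (j : Fin d) : ee R d j = fun k => if j = k then (1:R) else 0 := by
  funext k
  rw [ee, Pi.single_apply]
  by_cases h : j = k
  · subst h; simp
  · rw [if_neg h, if_neg (Ne.symm h)]

lemma iMulti_expand {d n : ℕ} (v : Fin n → (Fin d → R)) :
    ιMulti R n v = ∑ r : Fin n → Fin d,
      (∏ i, v i (r i)) • ιMulti R n (fun i => ee R d (r i)) := by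
  have hv : v = fun i => ∑ j : Fin d, v i j • ee R d j := by
    funext i
    conv_lhs => rw [pi_eq_sum_univ (v i)]
    refine Finset.sum_congr rfl fun j _ => ?_
    rw [ee_eq]
  conv_lhs => rw [hv]
  rw [show (ιMulti R n (M := Fin d → R)) (fun i => ∑ j : Fin d, v i j • ee R d j)
      = (ιMulti R n (M := Fin d → R)).toMultilinearMap
        (fun i => ∑ j : Fin d, v i j • ee R d j) from rfl]
  rw [MultilinearMap.map_sum]
  refine Finset.sum_congr rfl fun r _ => ?_
  exact MultilinearMap.map_smul_univ _ _ _

lemma iMulti_mem_span {d n : ℕ} (v : Fin n → (Fin d → R)) :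
    ιMulti R n v ∈ Submodule.span R (Set.range (fun S : SSet d n => (wB (R := R) S).1)) := by
  rw [iMulti_expand]
  refine Submodule.sum_mem _ fun r _ => Submodule.smul_mem _ _ ?_
  by_cases hr : Function.Injective r
  · have hcard : (Finset.univ.image r).card = n := by
      rw [Finset.card_image_of_injective _ hr, Finset.card_univ, Fintype.card_fin]
    have hmem : ∀ i, r i ∈ Finset.univ.image r :=
      fun i => Finset.mem_image_of_mem r (Finset.mem_univ i)
    set S : SSet d n := ⟨Finset.univ.image r, hcard⟩ with hSdef
    have hπinj : Function.Injective
        (fun i => (Finset.orderIsoOfFin _ hcard).symm ⟨r i, hmem i⟩) := by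
      intro a b hab
      have h2 := congrArg
        (fun z => ((Finset.orderIsoOfFin _ hcard z : {y // y ∈ Finset.univ.image r}) : Fin d))
        hab
      simp only [OrderIso.apply_symm_apply] at h2
      exact hr h2
    set πe := Equiv.ofBijective _ (Finite.injective_iff_bijective.1 hπinj) with hπe
    have hcomp : (fun i => ee R d (r i)) = basFam S ∘ πe := by
      funext i
      show ee R d (r i) = basFam S ((Finset.orderIsoOfFin _ hcard).symm ⟨r i, hmem i⟩)
      have h3 : S.1.orderEmbOfFin S.2
          ((Finset.orderIsoOfFin _ hcard).symm ⟨r i, hmem i⟩) = r i := by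
        rw [← Finset.coe_orderIsoOfFin_apply]
        exact congrArg Subtype.val
          ((Finset.orderIsoOfFin _ hcard).apply_symm_apply ⟨r i, hmem i⟩)
      rw [basFam, h3]
    rw [hcomp, AlternatingMap.map_perm]
    rcases Int.units_eq_one_or (Equiv.Perm.sign πe) with hs | hs
    · rw [hs]
      simp only [one_smul]
      exact Submodule.subset_span ⟨S, rfl⟩
    · rw [hs]
      simp only [Units.neg_smul, one_smul]
      exact neg_mem (Submodule.subset_span ⟨S, rfl⟩)
  · obtain ⟨a, b, hab, hne⟩ := Function.not_injective_iff.1 hr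
    rw [AlternatingMap.map_eq_zero_of_eq _ _ (by rw [hab]) hne]
    exact zero_mem _

lemma Psi_surjective {d n : ℕ} : Function.Surjective (Psi (R := R) d n) := by
  intro y
  have h1 : y.1 ∈ Submodule.span R (Set.range (ιMulti R n (M := Fin d → R))) := by
    rw [ExteriorAlgebra.ιMulti_span_fixedDegree]
    exact y.2
  have hy : y.1 ∈ Submodule.span R (Set.range (fun S : SSet d n => (wB (R := R) S).1)) := by
    refine Submodule.span_le.2 ?_ h1
    rintro z ⟨v, rfl⟩
    exact iMulti_mem_span v
  have hmap : Submodule.span R (Set.range (fun S : SSet d n => (wB (R := R) S).1))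
      ≤ Submodule.map (Submodule.subtype _) (LinearMap.range (Psi (R := R) d n)) := by
    rw [Submodule.span_le]
    rintro z ⟨S, rfl⟩
    exact ⟨wB S, ⟨Pi.single S 1, Psi_single S⟩, rfl⟩
  obtain ⟨w, ⟨f, hf⟩, hw⟩ := hmap hy
  exact ⟨f, by rw [hf]; exact Subtype.ext hw⟩

end KoszulAux
end Htest
section Itest
open ExteriorAlgebra Finset
namespace KoszulAux
variable {R : Type*} [CommRing R]

lemma pos_orderEmbOfFin {d k : ℕ} (T : Finset (Fin d)) (h : T.card = k) (t : Fin k) :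
    pos T (T.orderEmbOfFin h t) = t := by
  rw [pos]
  have himg : T.filter (· < T.orderEmbOfFin h t)
      = (Finset.univ.filter (· < t)).image (T.orderEmbOfFin h) := by
    ext y
    simp only [Finset.mem_filter, Finset.mem_image, Finset.mem_univ, true_and]
    constructor
    · rintro ⟨hyT, hlt⟩
      have hyr : y ∈ Set.range (T.orderEmbOfFin h) := by
        rw [Finset.range_orderEmbOfFin]
        exact hyT
      obtain ⟨s, rfl⟩ := hyr
      exact ⟨s, (OrderEmbedding.lt_iff_lt _).1 hlt, rfl⟩
    · rintro ⟨s, hs, rfl⟩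
      exact ⟨Finset.orderEmbOfFin_mem _ _ _, (OrderEmbedding.lt_iff_lt _).2 hs⟩
  rw [himg, Finset.card_image_of_injective _ (T.orderEmbOfFin h).injective]
  have hiio : Finset.univ.filter (· < t) = Finset.Iio t := by
    ext s
    simp
  rw [hiio, Fin.card_Iio]

lemma pos_erase {d k : ℕ} (T : Finset (Fin d)) (h : T.card = k) (t : Fin k) :
    pos (T.erase (T.orderEmbOfFin h t)) (T.orderEmbOfFin h t) = t := by
  rw [pos, Finset.filter_erase, Finset.erase_eq_of_notMem, ← pos]
  · exact pos_orderEmbOfFin T h t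
  · intro hc
    exact absurd (Finset.mem_filter.1 hc).2 (lt_irrefl _)

lemma card_erase_emb {d n : ℕ} (T : SSet d (n+1)) (t : Fin (n+1)) :
    (T.1.erase (T.1.orderEmbOfFin T.2 t)).card = n := by
  rw [Finset.card_erase_of_mem (Finset.orderEmbOfFin_mem _ _ _), T.2]
  rfl

lemma erase_orderEmb {d n : ℕ} (T : SSet d (n+1)) (t : Fin (n+1)) :
    (fun j : Fin n => T.1.orderEmbOfFin T.2 (t.succAbove j))
      = ⇑((T.1.erase (T.1.orderEmbOfFin T.2 t)).orderEmbOfFin (card_erase_emb T t)) := by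
  refine Finset.orderEmbOfFin_unique (card_erase_emb T t) ?_ ?_
  · intro j
    rw [Finset.mem_erase]
    constructor
    · intro hc
      exact Fin.succAbove_ne t j ((T.1.orderEmbOfFin T.2).injective hc)
    · exact Finset.orderEmbOfFin_mem _ _ _
  · exact (T.1.orderEmbOfFin T.2).strictMono.comp (Fin.strictMono_succAbove t)

/-- transport of the differential to the concrete complex, on basis vectors. -/
lemma DD_single_eq {d : ℕ} (x : Fin d → R) (n : ℕ) (T : SSet d (n+1)) :
    DD x n (Pi.single T (1:R)) = ∑ t : Fin (n+1),
      (((-1:R)^(t:ℕ) * x (T.1.orderEmbOfFin T.2 t)) •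
        (Pi.single (⟨T.1.erase (T.1.orderEmbOfFin T.2 t), card_erase_emb T t⟩ : SSet d n)
          (1:R) : CC R d n)) := by
  funext S
  rw [DD_apply, Finset.sum_apply]
  by_cases hM : ∃ t : Fin (n+1), T.1.erase (T.1.orderEmbOfFin T.2 t) = S.1
  · obtain ⟨t₀, ht₀⟩ := hM
    have hmem₀ : T.1.orderEmbOfFin T.2 t₀ ∈ T.1 := Finset.orderEmbOfFin_mem _ _ _
    have hnotS : T.1.orderEmbOfFin T.2 t₀ ∉ S.1 := by
      rw [← ht₀]
      exact Finset.notMem_erase _ _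
    have hins : insert (T.1.orderEmbOfFin T.2 t₀) S.1 = T.1 := by
      rw [← ht₀, Finset.insert_erase hmem₀]
    rw [Finset.sum_eq_single (T.1.orderEmbOfFin T.2 t₀), Finset.sum_eq_single t₀]
    · rw [dif_neg hnotS, Pi.smul_apply, smul_eq_mul]
      rw [Pi.single_apply, Pi.single_apply, if_pos (Subtype.ext hins),
        if_pos (Subtype.ext ht₀.symm), mul_one, mul_one]
      congr 2
      rw [← ht₀]
      exact pos_erase T.1 T.2 t₀
    · intro t _ ht
      rw [Pi.smul_apply, Pi.single_apply, if_neg, smul_zero]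
      intro hc
      have hc' : T.1.erase (T.1.orderEmbOfFin T.2 t) = S.1 := (congrArg Subtype.val hc).symm
      have hne : T.1.orderEmbOfFin T.2 t₀ ≠ T.1.orderEmbOfFin T.2 t :=
        fun he => ht ((T.1.orderEmbOfFin T.2).injective he).symm
      have hmem' : T.1.orderEmbOfFin T.2 t₀ ∈ T.1.erase (T.1.orderEmbOfFin T.2 t) :=
        Finset.mem_erase.2 ⟨hne, hmem₀⟩
      rw [hc', ← ht₀] at hmem'
      exact absurd hmem' (Finset.notMem_erase _ _)
    · intro h
      exact absurd (Finset.mem_univ _) h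
    · intro j _ hj
      by_cases hjS : j ∈ S.1
      · rw [dif_pos hjS]
      · rw [dif_neg hjS, Pi.single_apply, if_neg, mul_zero]
        intro hc
        have hc' : insert j S.1 = T.1 := congrArg Subtype.val hc
        have hjT : T.1.orderEmbOfFin T.2 t₀ ∈ insert j S.1 := by
          rw [hc']
          exact hmem₀
        rcases Finset.mem_insert.1 hjT with he | hin
        · exact hj he.symm
        · exact hnotS hin
    · intro h
      exact absurd (Finset.mem_univ _) h
  · have hzero : ∀ t : Fin (n+1),
        (((-1:R)^(t:ℕ) * x (T.1.orderEmbOfFin T.2 t)) •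
          (Pi.single (⟨T.1.erase (T.1.orderEmbOfFin T.2 t), card_erase_emb T t⟩ : SSet d n)
            (1:R) : CC R d n)) S = 0 := by
      intro t
      rw [Pi.smul_apply, Pi.single_apply, if_neg, smul_zero]
      intro hc
      exact hM ⟨t, (congrArg Subtype.val hc).symm⟩
    rw [Finset.sum_congr rfl (fun t _ => hzero t), Finset.sum_const_zero]
    refine Finset.sum_eq_zero fun j _ => ?_
    by_cases hjS : j ∈ S.1
    · rw [dif_pos hjS]
    · rw [dif_neg hjS, Pi.single_apply, if_neg, mul_zero]
      intro hc
      have hc' : insert j S.1 = T.1 := congrArg Subtype.val hc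
      have hjT : j ∈ T.1 := by
        rw [← hc']
        exact Finset.mem_insert_self _ _
      have hjr : j ∈ Set.range (T.1.orderEmbOfFin T.2) := by
        rw [Finset.range_orderEmbOfFin]
        exact hjT
      obtain ⟨t, rfl⟩ := hjr
      refine hM ⟨t, ?_⟩
      exact (congrArg (fun Z => Finset.erase Z (T.1.orderEmbOfFin T.2 t)) hc'.symm).trans
        (Finset.erase_insert hjS)

end KoszulAux
end Itest
section Jtest
open ExteriorAlgebra Finset
namespace KoszulAux
variable {R : Type*} [CommRing R]

lemma f_expand {d n : ℕ} (f : CC R d n) :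
    f = ∑ T : SSet d n, f T • (Pi.single T (1:R) : CC R d n) := by
  funext U
  rw [Finset.sum_apply, Finset.sum_eq_single U]
  · rw [Pi.smul_apply, Pi.single_apply, if_pos rfl, smul_eq_mul, mul_one]
  · intro T _ hT
    rw [Pi.smul_apply, Pi.single_apply, if_neg (Ne.symm hT), smul_zero]
  · intro h
    exact absurd (Finset.mem_univ U) h

lemma key_intertwine {d : ℕ} (x : Fin d → R) (n : ℕ)
    (δn : (⋀[R]^(n+1) (Fin d → R)) →ₗ[R] ⋀[R]^n (Fin d → R))
    (hδn : ∀ v : Fin (n+1) → (Fin d → R), δn (wedgeProd R v) = ∑ t : Fin (n+1),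
      ((-1 : R) ^ (t : ℕ) * ∑ j, v t j * x j) •
        wedgeProd R (fun j : Fin n => v (t.succAbove j)))
    (f : CC R d (n+1)) : δn (Psi d (n+1) f) = Psi d n (DD x n f) := by
  suffices h : δn.comp (Psi d (n+1)) = (Psi d n).comp (DD x n) by
    have := LinearMap.congr_fun h f
    simpa using this
  refine LinearMap.pi_ext fun T c => ?_
  have hc : (Pi.single T c : CC R d (n+1)) = c • (Pi.single T (1:R) : CC R d (n+1)) := by
    funext U
    rw [Pi.smul_apply, Pi.single_apply, Pi.single_apply, smul_eq_mul]
    split <;> simp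
  rw [LinearMap.comp_apply, LinearMap.comp_apply, hc, map_smul, map_smul, map_smul, map_smul]
  congr 1
  rw [Psi_single, DD_single_eq x n T, map_sum]
  rw [wB, hδn (basFam T)]
  refine Finset.sum_congr rfl fun t _ => ?_
  rw [map_smul, Psi_single]
  have hcoef : (∑ j, basFam T t j * x j) = x (T.1.orderEmbOfFin T.2 t) := by
    have h1 : ∀ j, basFam T t j * x j
        = if T.1.orderEmbOfFin T.2 t = j then x j else 0 := by
      intro j
      rw [basFam, ee_eq]
      by_cases h : T.1.orderEmbOfFin T.2 t = j
      · simp [h]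
      · simp [h]
    rw [Finset.sum_congr rfl fun j _ => h1 j, Finset.sum_ite_eq Finset.univ _ x,
      if_pos (Finset.mem_univ _)]
  rw [hcoef]
  congr 1
  rw [wB]
  congr 1
  funext j
  show ee R d (T.1.orderEmbOfFin T.2 (t.succAbove j)) = basFam _ j
  rw [basFam]
  exact congrArg (ee R d) (congrFun (erase_orderEmb T t) j)

lemma sset_zero_eq {d : ℕ} (S : SSet d 0) : S = ⟨∅, Finset.card_empty⟩ :=
  Subtype.ext (Finset.card_eq_zero.1 S.2)

lemma Psi_zero_apply {d : ℕ} (f : CC R d 0) :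
    Psi d 0 f = f ⟨∅, Finset.card_empty⟩ • wB ⟨∅, Finset.card_empty⟩ := by
  rw [Psi_apply]
  rw [Finset.sum_eq_single (⟨∅, Finset.card_empty⟩ : SSet d 0)]
  · intro T _ hT
    exact absurd (sset_zero_eq T) hT
  · intro h
    exact absurd (Finset.mem_univ _) h

lemma wB_zero_eq {d : ℕ} :
    (wB ⟨∅, Finset.card_empty⟩ : ⋀[R]^0 (Fin d → R))
      = wedgeProd R (fun i : Fin 0 => i.elim0) := by
  rw [wB]
  congr 1
  funext i
  exact i.elim0

end KoszulAux
end Jtest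

/-- Let `R` be a commutative ring, `(x₁, …, x_d)` a regular sequence
generating the ideal `J`, `E = R^d` free with basis `e₁, …, e_d`, and
`s : E → R`, `(yᵢ eᵢ) ↦ Σ yᵢ xᵢ`.  Let `K_•` be the Koszul complex, with `K_i = Λ^i E`
and differential `δᵢ(α₁ ∧ ⋯ ∧ α_{i+1}) = Σ_t (−1)^t s(α_t) α₁ ∧ ⋯ ∧ α̂_t ∧ ⋯`, and
`ε : K_0 = Λ^0 E → R/J` the augmentation (`ε(1) = 1`).  Then the augmented Koszul
complex `K_• → R/J` is exact: `ε` is surjective, the complex is exact at `K_0`, and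
it is exact at `K_i` for every `i ≥ 1`; i.e. `K_•` is a free resolution of `R/J`. -/
theorem koszul_complex_is_resolution
    (R : Type*) [CommRing R] (d : ℕ) (x : Fin d → R)
    (hreg : RingTheory.Sequence.IsRegular R (List.ofFn x))
    (J : Ideal R) (hJ : J = Ideal.span (Set.range x))
    (δ : ∀ i : ℕ, (⋀[R]^(i+1) (Fin d → R)) →ₗ[R] ⋀[R]^i (Fin d → R))
    (hδ : ∀ (i : ℕ) (v : Fin (i+1) → (Fin d → R)),
      δ i (wedgeProd R v) = ∑ t : Fin (i+1),
        ((-1 : R) ^ (t : ℕ) * ∑ j, v t j * x j) •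
          wedgeProd R (fun j : Fin i => v (t.succAbove j)))
    (ε : (⋀[R]^0 (Fin d → R)) →ₗ[R] R ⧸ J)
    (hε : ε (wedgeProd R (fun i : Fin 0 => i.elim0)) = 1) :
    Function.Surjective ε ∧ Function.Exact (δ 0) ε ∧
      ∀ i : ℕ, Function.Exact (δ (i+1)) (δ i) := by
  classical
  have hwreg := hreg.toIsWeaklyRegular
  have H := KoszulAux.koszul_exact_concrete x hwreg
  have hKI : ∀ (n : ℕ) (f : KoszulAux.CC R d (n+1)),
      δ n (KoszulAux.Psi d (n+1) f) = KoszulAux.Psi d n (KoszulAux.DD x n f) :=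
    fun n f => KoszulAux.key_intertwine x n (δ n) (hδ n) f
  have hepsPsi : ∀ f : KoszulAux.CC R d 0,
      ε (KoszulAux.Psi d 0 f) = Ideal.Quotient.mk J (f ⟨∅, Finset.card_empty⟩) := by
    intro f
    rw [KoszulAux.Psi_zero_apply, map_smul, KoszulAux.wB_zero_eq, hε]
    rw [← Ideal.Quotient.algebraMap_eq, Algebra.algebraMap_eq_smul_one]
  refine ⟨?_, ?_, ?_⟩
  · intro y
    obtain ⟨r, hr⟩ := Ideal.Quotient.mk_surjective y
    exact ⟨KoszulAux.Psi d 0 (fun _ => r), by rw [hepsPsi]; exact hr⟩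
  · intro y
    obtain ⟨f, rfl⟩ := KoszulAux.Psi_surjective (R := R) (d := d) (n := 0) y
    constructor
    · intro h0
      rw [hepsPsi] at h0
      have hmem : f ⟨∅, Finset.card_empty⟩ ∈ Ideal.span (Set.range x) := by
        rw [← hJ]
        exact (Ideal.Quotient.eq_zero_iff_mem).1 h0
      obtain ⟨g, hg⟩ := H.1 f hmem
      exact ⟨KoszulAux.Psi d 1 g, by rw [hKI 0 g, hg]⟩
    · rintro ⟨z, hz⟩
      obtain ⟨h, rfl⟩ := KoszulAux.Psi_surjective (R := R) (d := d) (n := 1) z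
      rw [← hz, hKI 0 h, hepsPsi]
      rw [Ideal.Quotient.eq_zero_iff_mem, hJ]
      exact KoszulAux.DD_val_mem x 0 h _
  · intro i y
    obtain ⟨f, rfl⟩ := KoszulAux.Psi_surjective (R := R) (d := d) (n := i+1) y
    constructor
    · intro h0
      rw [hKI i f] at h0
      have hf : KoszulAux.DD x i f = 0 := by
        apply KoszulAux.Psi_injective (R := R) (d := d) (n := i)
        rw [h0, map_zero]
      obtain ⟨g, hg⟩ := H.2 i f hf
      exact ⟨KoszulAux.Psi d (i+2) g, by rw [hKI (i+1) g, hg]⟩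
    · rintro ⟨z, hz⟩
      obtain ⟨h, rfl⟩ := KoszulAux.Psi_surjective (R := R) (d := d) (n := i+2) z
      rw [← hz, hKI (i+1) h, hKI i, KoszulAux.DD_DD]
      exact map_zero _
end

section
/- Let R be a commutative Noetherian ring, J = (x₁, …, x_d) an ideal generated by a regular sequence, and L an R-module. Then Ext^d_R(R/J, L) is isomorphic as an R/J-module to Hom_{R/J}(Λ^d(J/J²), L/JL), via the map induced on the top cohomology of the dual Koszul complex sending f ∈ Hom_R(Λ^d E, L) to the map x̄₁ ∧ ⋯ ∧ x̄_d ↦ f(x₁ ∧ ⋯ ∧ x_d) mod JL. -/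
open ExteriorAlgebra

section Aux
variable {R : Type*} [CommRing R] {L : Type*} [AddCommGroup L] [Module R L] {n : ℕ}

lemma altSum_apply {M : Type*} [AddCommGroup M] [Module R M] {ι : Type*} {α : Type*}
    (s : Finset α) (f : α → (M [⋀^ι]→ₗ[R] L)) (v : ι → M) :
    (∑ a ∈ s, f a) v = ∑ a ∈ s, f a v := by
  induction s using Finset.cons_induction with
  | empty => rfl
  | cons a s ha ih => rw [Finset.sum_cons, Finset.sum_cons, AlternatingMap.add_apply, ih]

end Aux




section Aux
variable {R : Type*} [CommRing R] {L : Type*} [AddCommGroup L] [Module R L] {n : ℕ}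

/-- A top-degree alternating map on `R^n` is determinant times its value on the basis. -/
lemma alt_top (f : (Fin n → R) [⋀^Fin n]→ₗ[R] L) (v : Fin n → Fin n → R) :
    f v = (Matrix.of v).det • f (fun i => Pi.single i (1 : R)) := by
  classical
  set e := Pi.basisFun R (Fin n) with he
  have hb : (fun i : Fin n => Pi.single i (1 : R)) = ⇑e := by
    funext i; rw [he, Pi.basisFun_apply]
  have key : f = (LinearMap.toSpanSingleton R L (f ⇑e)).compAlternatingMap e.det := by
    refine Module.Basis.ext_alternating e fun i hinj => ?_
    let σ : Equiv.Perm (Fin n) := Equiv.ofBijective i (Finite.injective_iff_bijective.1 hinj)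
    have hσ : (fun j => e (i j)) = ⇑e ∘ σ := rfl
    rw [hσ]
    rw [AlternatingMap.map_perm]
    simp only [LinearMap.compAlternatingMap_apply, AlternatingMap.map_perm, Module.Basis.det_self,
      LinearMap.toSpanSingleton_apply, one_smul]
  conv_lhs => rw [key]
  rw [hb]
  simp only [LinearMap.compAlternatingMap_apply, LinearMap.toSpanSingleton_apply]
  congr 1
  rw [he, Pi.basisFun_det]
  rfl

/-- `ιMulti` as an alternating map into the exterior power. -/
noncomputable def wedgeAlt (R : Type*) [CommRing R] (M : Type*) [AddCommGroup M] [Module R M]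
    (m : ℕ) : M [⋀^Fin m]→ₗ[R] (⋀[R]^m M) :=
  (ExteriorAlgebra.ιMulti R m).codRestrict (⋀[R]^m M) (fun v => ιMulti_range R m ⟨v, rfl⟩)

lemma wedgeProd_eq_wedgeAlt {M : Type*} [AddCommGroup M] [Module R M] {m : ℕ} (v : Fin m → M) :
    wedgeProd R v = wedgeAlt R M m v := rfl

lemma wedge_eq_det_smul (v : Fin n → Fin n → R) :
    wedgeProd R v = (Matrix.of v).det • wedgeProd R (fun i => Pi.single i (1 : R)) := by
  rw [wedgeProd_eq_wedgeAlt, wedgeProd_eq_wedgeAlt, alt_top]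

/-- Two linear maps on the top exterior power of `R^n` agree if they agree on the top wedge. -/
lemma top_ext (F₁ F₂ : (⋀[R]^n (Fin n → R)) →ₗ[R] L)
    (h : F₁ (wedgeProd R (fun i => Pi.single i (1 : R)))
       = F₂ (wedgeProd R (fun i => Pi.single i (1 : R)))) : F₁ = F₂ := by
  set K : Submodule R (⋀[R]^n (Fin n → R)) := LinearMap.ker (F₁ - F₂) with hK
  have hwedge : ∀ v : Fin n → Fin n → R, wedgeProd R v ∈ K := by
    intro v
    rw [hK, LinearMap.mem_ker, LinearMap.sub_apply, sub_eq_zero, wedge_eq_det_smul v,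
      map_smul, map_smul, h]
  have hspan : Submodule.span R (Set.range (ιMulti R n))
      ≤ K.map (⋀[R]^n (Fin n → R)).subtype := by
    rw [Submodule.span_le]
    rintro - ⟨v, rfl⟩
    exact ⟨wedgeProd R v, hwedge v, rfl⟩
  refine LinearMap.ext fun z => ?_
  obtain ⟨y, hy, hy2⟩ := hspan (by rw [ιMulti_span_fixedDegree]; exact z.2)
  have hz : y = z := Subtype.ext hy2
  subst hz
  have h2 : (F₁ - F₂) y = 0 := hy
  rw [LinearMap.sub_apply, sub_eq_zero] at h2
  exact h2

/-- Linear map on an exterior power from an alternating map. -/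
noncomputable def mkMap {M : Type*} [AddCommGroup M] [Module R M] {m : ℕ}
    (A : M [⋀^Fin m]→ₗ[R] L) : (⋀[R]^m M) →ₗ[R] L :=
  (ExteriorAlgebra.liftAlternating (R := R) (Pi.single m A)).comp (Submodule.subtype _)

lemma mkMap_apply {M : Type*} [AddCommGroup M] [Module R M] {m : ℕ}
    (A : M [⋀^Fin m]→ₗ[R] L) (v : Fin m → M) : mkMap A (wedgeProd R v) = A v := by
  classical
  simp [mkMap, wedgeProd, ExteriorAlgebra.liftAlternating_apply_ιMulti]

end Aux


/-- fundamental local isomorphism: Let `R` be a commutative Noetherian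
ring, `J = (x₁, …, x_d)` generated by a regular sequence (`d = e + 1`), `E = R^d`
free with the Koszul resolution `P_• = Λ^• E` of `R/J`, and `L` an `R`-module.
Since `Λ^d (J/J²)` is free of rank one over `R/J` on `x̄₁ ∧ ⋯ ∧ x̄_d`, evaluation at
this basis vector identifies `Hom_{R/J}(Λ^d(J/J²), L/JL)` with `L/JL`.  The claim
`Ext^d_R(R/J, L) ≅ Hom_{R/J}(Λ^d(J/J²), L/JL)` via the map induced on the top
cohomology of the dual Koszul complex, sending `f ∈ Hom_R(Λ^d E, L)` to
`x̄₁ ∧ ⋯ ∧ x̄_d ↦ f(x₁ ∧ ⋯ ∧ x_d) mod JL`, then reads: the map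
`Φ : Hom_R(Λ^d E, L) → L/JL`, `f ↦ f(e₁ ∧ ⋯ ∧ e_d) mod JL`, is surjective with
kernel exactly the image of the top Koszul codifferential `g ↦ g ∘ δ`. -/
theorem fundamental_local_isomorphism
    (R : Type*) [CommRing R] [IsNoetherianRing R] (e : ℕ) (x : Fin (e+1) → R)
    (hreg : RingTheory.Sequence.IsRegular R (List.ofFn x))
    (J : Ideal R) (hJ : J = Ideal.span (Set.range x))
    (L : Type*) [AddCommGroup L] [Module R L]
    (δ : (⋀[R]^(e+1) (Fin (e+1) → R)) →ₗ[R] ⋀[R]^e (Fin (e+1) → R))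
    (hδ : ∀ v : Fin (e+1) → (Fin (e+1) → R),
      δ (wedgeProd R v) = ∑ t : Fin (e+1),
        ((-1 : R) ^ (t : ℕ) * ∑ j, v t j * x j) •
          wedgeProd R (fun j : Fin e => v (t.succAbove j))) :
    Function.Surjective
      (fun f : (⋀[R]^(e+1) (Fin (e+1) → R)) →ₗ[R] L =>
        (Submodule.Quotient.mk (p := J • (⊤ : Submodule R L))
          (f (wedgeProd R (fun i => Pi.single i (1 : R)))))) ∧
    ∀ f : (⋀[R]^(e+1) (Fin (e+1) → R)) →ₗ[R] L,
      (Submodule.Quotient.mk (p := J • (⊤ : Submodule R L))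
          (f (wedgeProd R (fun i => Pi.single i (1 : R)))) = 0
        ↔ ∃ g : (⋀[R]^e (Fin (e+1) → R)) →ₗ[R] L, f = g.comp δ) := by
  classical
  have hx : ∀ t : Fin (e+1), (∑ j, (Pi.single t 1 : Fin (e+1) → R) j * x j) = x t := by
    intro t
    simp [Pi.single_apply]
  have hxJ : ∀ t, x t ∈ J := fun t => hJ ▸ Ideal.subset_span ⟨t, rfl⟩
  constructor
  · intro q
    obtain ⟨l, rfl⟩ := Submodule.Quotient.mk_surjective _ q
    refine ⟨mkMap ((LinearMap.toSpanSingleton R L l).compAlternatingMap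
      (Pi.basisFun R (Fin (e+1))).det), ?_⟩
    have hb : (fun i : Fin (e+1) => Pi.single i (1:R)) = ⇑(Pi.basisFun R (Fin (e+1))) := by
      funext i; rw [Pi.basisFun_apply]
    simp only [mkMap_apply, LinearMap.compAlternatingMap_apply, hb, Module.Basis.det_self,
      LinearMap.toSpanSingleton_apply, one_smul]
  · intro f
    constructor
    · intro hf
      rw [Submodule.Quotient.mk_eq_zero] at hf
      have hrep : ∃ l : Fin (e+1) → L,
          f (wedgeProd R (fun i => Pi.single i (1:R))) = ∑ t, x t • l t := by
        refine Submodule.smul_induction_on hf ?_ ?_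
        · intro r hr m _
          rw [hJ] at hr
          obtain ⟨c, hc⟩ := (Submodule.mem_span_range_iff_exists_fun R).mp hr
          refine ⟨fun t => c t • m, ?_⟩
          rw [← hc, Finset.sum_smul]
          exact Finset.sum_congr rfl fun t _ => by rw [smul_eq_mul, mul_comm, mul_smul]
        · rintro m₁ m₂ ⟨l₁, h₁⟩ ⟨l₂, h₂⟩
          exact ⟨l₁ + l₂, by rw [h₁, h₂, ← Finset.sum_add_distrib]; simp [smul_add]⟩
      obtain ⟨l, hl⟩ := hrep
      set A : (Fin (e+1) → R) [⋀^Fin e]→ₗ[R] L :=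
        ∑ t : Fin (e+1), ((-1:R)^(t:ℕ)) •
          (LinearMap.toSpanSingleton R L (l t)).compAlternatingMap
            (Matrix.detRowAlternating.compLinearMap (LinearMap.funLeft R R t.succAbove)) with hA
      have hconv : ∀ (M : Fin e → Fin e → R), Matrix.detRowAlternating M = (Matrix.of M).det :=
        fun _ => rfl
      have hdet : ∀ t s : Fin (e+1),
          Matrix.detRowAlternating (R := R)
            (fun i : Fin e => (LinearMap.funLeft R R s.succAbove)
              (Pi.single (t.succAbove i) (1:R)))
            = if s = t then 1 else 0 := by
        intro t s
        by_cases hts : s = t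
        · subst hts
          rw [if_pos rfl, hconv]
          have h1 : (Matrix.of fun i j : Fin e => (LinearMap.funLeft R R s.succAbove)
              (Pi.single (s.succAbove i) (1:R)) j) = 1 := by
            ext i j
            simp only [Matrix.of_apply, LinearMap.funLeft_apply, Matrix.one_apply,
              Pi.single_apply, Fin.succAbove_right_injective.eq_iff]
            by_cases hij : i = j
            · simp [hij]
            · simp [hij, Ne.symm hij]
          rw [h1, Matrix.det_one]
        · rw [if_neg hts, hconv]
          obtain ⟨i₀, hi₀⟩ := Fin.exists_succAbove_eq hts
          refine Matrix.det_eq_zero_of_row_eq_zero i₀ fun j => ?_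
          show (LinearMap.funLeft R R s.succAbove) (Pi.single (t.succAbove i₀) (1:R)) j = 0
          rw [hi₀, LinearMap.funLeft_apply]
          exact Pi.single_eq_of_ne (Fin.succAbove_ne s j) 1
      have hAval : ∀ t : Fin (e+1),
          A (fun j => Pi.single (t.succAbove j) (1:R)) = ((-1:R)^(t:ℕ)) • l t := by
        intro t
        rw [hA, altSum_apply]
        rw [Finset.sum_eq_single t ?_ (by simp)]
        · simp only [AlternatingMap.smul_apply, LinearMap.compAlternatingMap_apply,
            AlternatingMap.compLinearMap_apply, LinearMap.toSpanSingleton_apply]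
          rw [hdet t t, if_pos rfl, one_smul]
        · intro s _ hst
          simp only [AlternatingMap.smul_apply, LinearMap.compAlternatingMap_apply,
            AlternatingMap.compLinearMap_apply, LinearMap.toSpanSingleton_apply]
          rw [hdet t s, if_neg hst, zero_smul, smul_zero]
      refine ⟨mkMap A, top_ext _ _ ?_⟩
      rw [LinearMap.comp_apply, hδ, map_sum]
      simp only [map_smul, mkMap_apply, hAval, hx]
      rw [hl]
      refine Finset.sum_congr rfl fun t _ => ?_
      have ha : ((-1:R)^(t:ℕ)) * ((-1:R)^(t:ℕ)) = 1 := by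
        rw [← pow_add]
        exact Even.neg_one_pow ⟨(t : ℕ), rfl⟩
      rw [smul_smul]
      rw [show ((-1:R)^(t:ℕ) * x t) * ((-1:R)^(t:ℕ)) = x t * ((-1:R)^(t:ℕ) * (-1:R)^(t:ℕ)) by
        ring, ha, mul_one]
    · rintro ⟨g, rfl⟩
      rw [Submodule.Quotient.mk_eq_zero]
      rw [LinearMap.comp_apply, hδ, map_sum]
      refine Submodule.sum_mem _ fun t _ => ?_
      rw [map_smul]
      refine Submodule.smul_mem_smul ?_ trivial
      rw [hx]
      exact Ideal.mul_mem_left _ _ (hxJ t)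
end
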